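/- arXiv:1806.04988 — 4 statements merged into one kernel-verified Lean document; each statement's English description precedes it below -/
import Mathlib

section
/- Let k ≥ 4 be an integer and let c ≥ k(1 - (3/2)e^{-k}). If x ∈ [0,1] is the largest solution of x = (1 - e^{-cx})^{k-1}, and x is positive, then x ≥ 1 - (3k/2) e^{-c}. -/
open Real Set
set_option maxHeartbeats 1000000

lemma exp4_ge : (54:ℝ) ≤ Real.exp 4 := by
  have h := Real.exp_one_gt_d9
  have he : Real.exp 4 = Real.exp 1 ^ 4 := by
    rw [← Real.exp_nat_mul]; norm_num
  have h4 : (2.7182818283:ℝ)^4 ≤ Real.exp 1 ^ 4 := by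
    apply pow_le_pow_left₀ (by norm_num) h.le
  rw [he]; nlinarith

lemma exp25_le : Real.exp (2/5) ≤ 3/2 := by
  have h5 : Real.exp (2/5) ^ 5 = Real.exp 2 := by
    rw [← Real.exp_nat_mul]; norm_num
  have h2 : Real.exp 2 ≤ (3/2:ℝ)^5 := by
    have he : Real.exp 2 = Real.exp 1 ^ 2 := by rw [← Real.exp_nat_mul]; norm_num
    have h := Real.exp_one_lt_d9
    nlinarith [Real.exp_pos 1]
  exact le_of_pow_le_pow_left₀ (by norm_num : (5:ℕ) ≠ 0) (by norm_num : (0:ℝ) ≤ 3/2) (h5 ▸ h2)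

lemma mono_texp {a b : ℝ} (ha : 1 ≤ a) (hab : a ≤ b) :
    b * Real.exp (-b) ≤ a * Real.exp (-a) := by
  have h1 : b - a + 1 ≤ Real.exp (b - a) := Real.add_one_le_exp _
  have h2 : b ≤ a * Real.exp (b - a) := by nlinarith
  have h3 : Real.exp (b - a) * Real.exp (-b) = Real.exp (-a) := by
    rw [← Real.exp_add]; ring_nf
  calc b * Real.exp (-b) ≤ (a * Real.exp (b-a)) * Real.exp (-b) := by
        have := (Real.exp_pos (-b)).le
        nlinarith
    _ = a * Real.exp (-a) := by rw [mul_assoc, h3]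

lemma key_ind (k : ℕ) (hk : 4 ≤ k) :
    (15/2:ℝ) * (k:ℝ)^3 ≤ (2*(k:ℝ)+5) * Real.exp (35*(k:ℝ)/36) := by
  induction k, hk using Nat.le_induction with
  | base =>
    have h2 : (8/9:ℝ) ≤ Real.exp (-1/9) := by
      have := Real.add_one_le_exp (-1/9:ℝ); linarith
    have h3 := exp4_ge
    have h1 : Real.exp (35*((4:ℕ):ℝ)/36) = Real.exp 4 * Real.exp (-1/9) := by
      rw [← Real.exp_add]; norm_num
    rw [h1]
    push_cast
    nlinarith [Real.exp_pos (-1/9:ℝ)]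
  | succ n hn ih =>
    have hK : (4:ℝ) ≤ (n:ℝ) := by exact_mod_cast hn
    set E := Real.exp (35*(n:ℝ)/36) with hEdef
    set W := Real.exp (35/36:ℝ) with hWdef
    have hEpos : (0:ℝ) < E := Real.exp_pos _
    have hWpos : (0:ℝ) < W := Real.exp_pos _
    have hstep : Real.exp (35*((n:ℝ)+1)/36) = E * W := by
      rw [hEdef, hWdef, ← Real.exp_add]; ring_nf
    have h71 : (71/36:ℝ) ≤ W := by
      have := Real.add_one_le_exp (35/36:ℝ); rw [hWdef]; linarith
    have hpoly : 36*((n:ℝ)+1)^3*(2*(n:ℝ)+5) ≤ 71*(n:ℝ)^3*(2*(n:ℝ)+7) := by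
      nlinarith [sq_nonneg ((n:ℝ)-4), sq_nonneg (n:ℝ), mul_nonneg (mul_nonneg (by linarith : (0:ℝ) ≤ (n:ℝ)-4) (by linarith : (0:ℝ) ≤ (n:ℝ))) (by linarith : (0:ℝ) ≤ (n:ℝ)),
        mul_nonneg (by linarith : (0:ℝ) ≤ (n:ℝ)-4) (sq_nonneg ((n:ℝ)))]
    have hprod : (15/2)*(n:ℝ)^3*(71/36) ≤ ((2*(n:ℝ)+5)*E)*W := by
      nlinarith [mul_le_mul ih h71 (by norm_num) (by positivity : (0:ℝ) ≤ (2*(n:ℝ)+5)*E)]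
    push_cast
    rw [hstep]
    have h27 : (0:ℝ) < 2*(n:ℝ)+7 := by linarith
    have h25 : (0:ℝ) < 2*(n:ℝ)+5 := by linarith
    have hgoal : (15/2)*((n:ℝ)+1)^3 * (2*(n:ℝ)+5) ≤ ((2*(n:ℝ)+7) * (E*W)) * (2*(n:ℝ)+5) := by
      nlinarith [mul_le_mul_of_nonneg_left hprod h27.le]
    have := le_of_mul_le_mul_right hgoal h25
    linarith

lemma key2 (k : ℕ) (hk : 4 ≤ k) (c : ℝ)
    (hc : (k:ℝ) * (1 - (3/2) * Real.exp (-(k:ℝ))) ≤ c) :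
    3*(k:ℝ)/2 * (c * Real.exp (-c)) ≤ 2/5 + 1/(k:ℝ) := by
  have hK : (4:ℝ) ≤ (k:ℝ) := by exact_mod_cast hk
  have hek : Real.exp (-(k:ℝ)) ≤ 1/54 := by
    have h54 : (54:ℝ) ≤ Real.exp (k:ℝ) :=
      le_trans exp4_ge (Real.exp_le_exp.2 (by linarith))
    rw [Real.exp_neg]
    rw [inv_le_comm₀ (Real.exp_pos _) (by norm_num)]
    simpa using h54
  have ha : 35*(k:ℝ)/36 ≤ c := le_trans (by nlinarith) hc
  have h1 : (1:ℝ) ≤ 35*(k:ℝ)/36 := by linarith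
  have hmono := mono_texp h1 ha
  set a := 35*(k:ℝ)/36 with hadef
  have hexpa : (0:ℝ) < Real.exp (-a) := Real.exp_pos _
  have hka : a ≤ (k:ℝ) := by rw [hadef]; linarith
  have h2 : c * Real.exp (-c) ≤ (k:ℝ) * Real.exp (-a) := by
    calc c * Real.exp (-c) ≤ a * Real.exp (-a) := hmono
      _ ≤ (k:ℝ) * Real.exp (-a) := by nlinarith
  have key := key_ind k hk
  have hA : Real.exp a * Real.exp (-a) = 1 := by rw [← Real.exp_add]; simp
  have hkpos : (0:ℝ) < (k:ℝ) := by linarith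
  -- (3/2) k^2 * exp(-a) ≤ 2/5 + 1/k
  have h3 : (3/2) * (k:ℝ)^2 * Real.exp (-a) ≤ 2/5 + 1/(k:ℝ) := by
    have h4 : (2/5 + 1/(k:ℝ)) = (2*(k:ℝ)+5)/(5*(k:ℝ)) := by field_simp
    rw [h4, le_div_iff₀ (by positivity)]
    have := mul_le_mul_of_nonneg_right key hexpa.le
    calc (3/2) * (k:ℝ)^2 * Real.exp (-a) * (5*(k:ℝ))
        = ((15/2) * (k:ℝ)^3) * Real.exp (-a) := by ring
      _ ≤ ((2*(k:ℝ)+5) * Real.exp a) * Real.exp (-a) := this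
      _ = (2*(k:ℝ)+5) * (Real.exp a * Real.exp (-a)) := by ring
      _ = 2*(k:ℝ)+5 := by rw [hA, mul_one]
  calc 3*(k:ℝ)/2 * (c * Real.exp (-c)) ≤ 3*(k:ℝ)/2 * ((k:ℝ) * Real.exp (-a)) := by
        have : (0:ℝ) ≤ 3*(k:ℝ)/2 := by linarith
        exact mul_le_mul_of_nonneg_left h2 this
    _ = (3/2) * (k:ℝ)^2 * Real.exp (-a) := by ring
    _ ≤ 2/5 + 1/(k:ℝ) := h3

/-- For `k ≥ 4` and `c ≥ k(1 - (3/2)e^{-k})`, if `x` is the largest solution in `[0,1]`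
of `x = (1 - e^{-cx})^{k-1}` and `x > 0`, then `x ≥ 1 - (3k/2) e^{-c}`. -/
theorem largest_fixed_point_lower_bound (k : ℕ) (hk : 4 ≤ k) (c : ℝ)
    (hc : (k:ℝ) * (1 - (3/2) * Real.exp (-(k:ℝ))) ≤ c) (x : ℝ)
    (hx : IsGreatest {y ∈ Icc (0:ℝ) 1 | y = (1 - Real.exp (-c * y)) ^ (k - 1)} x)
    (hxpos : 0 < x) :
    1 - (3 * (k:ℝ) / 2) * Real.exp (-c) ≤ x := by
  have hK : (4:ℝ) ≤ (k:ℝ) := by exact_mod_cast hk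
  set t : ℝ := 1 - (3 * (k:ℝ) / 2) * Real.exp (-c) with htdef
  by_cases ht0 : t ≤ 0
  · linarith
  push_neg at ht0
  have hek : Real.exp (-(k:ℝ)) ≤ 1/54 := by
    have h54 : (54:ℝ) ≤ Real.exp (k:ℝ) :=
      le_trans exp4_ge (Real.exp_le_exp.2 (by linarith))
    rw [Real.exp_neg]
    rw [inv_le_comm₀ (Real.exp_pos _) (by norm_num)]
    simpa using h54
  have hcpos : (0:ℝ) < c := lt_of_lt_of_le (by nlinarith) hc
  have hec : (0:ℝ) < Real.exp (-c) := Real.exp_pos _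
  have ht1 : t ≤ 1 := by rw [htdef]; nlinarith
  have hk1 : (1:ℝ) ≤ (k:ℝ) - 1 := by linarith
  have hkey2 := key2 k hk c hc
  -- exp(1/k) ≤ k/(k-1)
  have hexpinv : Real.exp (1/(k:ℝ)) ≤ (k:ℝ)/((k:ℝ)-1) := by
    have h1 : 1 - 1/(k:ℝ) ≤ Real.exp (-(1/(k:ℝ))) := by
      have := Real.add_one_le_exp (-(1/(k:ℝ))); linarith
    have h2 : Real.exp (1/(k:ℝ)) * Real.exp (-(1/(k:ℝ))) = 1 := by
      rw [← Real.exp_add]; simp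
    have h3 : (0:ℝ) < Real.exp (1/(k:ℝ)) := Real.exp_pos _
    rw [le_div_iff₀ (by linarith)]
    have h4 : (1 - 1/(k:ℝ)) * (k:ℝ) = (k:ℝ) - 1 := by field_simp
    nlinarith [mul_le_mul_of_nonneg_left h1 h3.le]
  have hct : -c * t = -c + 3*(k:ℝ)/2 * (c * Real.exp (-c)) := by
    rw [htdef]; ring
  have hexpct : Real.exp (-c * t) ≤ Real.exp (-c) * ((3/2) * ((k:ℝ)/((k:ℝ)-1))) := by
    rw [hct, Real.exp_add]
    have h5 : Real.exp (3*(k:ℝ)/2 * (c * Real.exp (-c))) ≤ Real.exp (2/5 + 1/(k:ℝ)) :=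
      Real.exp_le_exp.2 hkey2
    have h6 : Real.exp (2/5 + 1/(k:ℝ)) = Real.exp (2/5) * Real.exp (1/(k:ℝ)) := by
      rw [← Real.exp_add]
    have h7 : Real.exp (2/5) * Real.exp (1/(k:ℝ)) ≤ (3/2) * ((k:ℝ)/((k:ℝ)-1)) := by
      have hp := Real.exp_pos (1/(k:ℝ))
      have hkk : (0:ℝ) < (k:ℝ)/((k:ℝ)-1) := by positivity
      nlinarith [exp25_le]
    have h8 := (h5.trans_eq h6).trans h7
    nlinarith [Real.exp_pos (-c)]
  have hmain : ((k:ℝ)-1) * Real.exp (-c*t) ≤ (3 * (k:ℝ) / 2) * Real.exp (-c) := by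
    calc ((k:ℝ)-1) * Real.exp (-c*t)
        ≤ ((k:ℝ)-1) * (Real.exp (-c) * ((3/2) * ((k:ℝ)/((k:ℝ)-1)))) :=
          mul_le_mul_of_nonneg_left hexpct (by linarith)
      _ = (3 * (k:ℝ) / 2) * Real.exp (-c) * (((k:ℝ)-1) / ((k:ℝ)-1)) := by ring
      _ = (3 * (k:ℝ) / 2) * Real.exp (-c) := by
          rw [div_self (by linarith : (k:ℝ)-1 ≠ 0), mul_one]
  -- Bernoulli : t ≤ f t
  have hexpt1 : Real.exp (-c * t) ≤ 1 := by
    apply Real.exp_le_one_iff.2; nlinarith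
  have hft : t ≤ (1 - Real.exp (-c * t)) ^ (k - 1) := by
    have hcast : ((k-1:ℕ):ℝ) = (k:ℝ) - 1 := by
      rw [Nat.cast_sub (by omega)]; norm_num
    have hb := one_add_mul_le_pow
      (show (-2:ℝ) ≤ -Real.exp (-c*t) by nlinarith) (k-1)
    rw [hcast] at hb
    have : 1 + ((k:ℝ)-1) * (-Real.exp (-c*t)) = 1 - ((k:ℝ)-1) * Real.exp (-c*t) := by ring
    rw [this] at hb
    have h1e : (1:ℝ) + -Real.exp (-c*t) = 1 - Real.exp (-c*t) := by ring
    rw [h1e] at hb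
    calc t = 1 - (3 * (k:ℝ) / 2) * Real.exp (-c) := htdef
      _ ≤ 1 - ((k:ℝ)-1) * Real.exp (-c*t) := by linarith
      _ ≤ (1 - Real.exp (-c*t)) ^ (k-1) := hb
  -- f 1 ≤ 1
  have hf1 : (1 - Real.exp (-c * 1)) ^ (k - 1) ≤ 1 := by
    apply pow_le_one₀
    · have : Real.exp (-c*1) ≤ 1 := by apply Real.exp_le_one_iff.2; nlinarith
      linarith
    · nlinarith [Real.exp_pos (-c*1)]
  -- IVT
  set g : ℝ → ℝ := fun y => (1 - Real.exp (-c*y))^(k-1) - y with hgdef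
  have hcont : ContinuousOn g (Icc t 1) := by
    apply Continuous.continuousOn
    fun_prop
  have hsub := intermediate_value_Icc' ht1 hcont
  have h0mem : (0:ℝ) ∈ Icc (g 1) (g t) := by
    constructor
    · show g 1 ≤ 0
      simp only [hgdef]; linarith
    · show (0:ℝ) ≤ g t
      simp only [hgdef]; linarith
  obtain ⟨z, hzmem, hz⟩ := hsub h0mem
  have hzeq : z = (1 - Real.exp (-c * z)) ^ (k - 1) := by
    have : (1 - Real.exp (-c*z))^(k-1) - z = 0 := hz
    linarith
  have hzx : z ≤ x := hx.2 ⟨⟨by linarith [hzmem.1], hzmem.2⟩, hzeq⟩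
  linarith [hzmem.1]
end

section
/- Let k ≥ 4 be an integer. Writing ε = 1 - x where x ∈ (0,1) satisfies x = (1 - e^{-cx})^{k-1} with c ≥ k(1 - (3/2)e^{-k}), one has ε ≤ (k-1) e^{-c + cε}; in particular, since cε < 1, it follows that ε ≤ (k-1)e^{-c+1}. -/
open Real Set

/-- Let `k ≥ 4`, `c ≥ k(1 - (3/2)e^{-k})`, and `x ∈ (0,1)` with
`x = (1 - e^{-cx})^{k-1}`. Writing `ε = 1 - x` and assuming `ε ≤ 1/c`, one has
`ε ≤ (k-1) e^{-c + cε}`, and consequently `ε ≤ (k-1) e^{-c+1}`. -/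
theorem epsilon_bound (k : ℕ) (hk : 4 ≤ k) (c : ℝ)
    (hc : (k:ℝ) * (1 - (3/2) * Real.exp (-(k:ℝ))) ≤ c)
    (x : ℝ) (hx : x ∈ Ioo (0:ℝ) 1)
    (hfix : x = (1 - Real.exp (-c * x)) ^ (k - 1))
    (hεc : 1 - x ≤ 1 / c) :
    1 - x ≤ ((k:ℝ) - 1) * Real.exp (-c + c * (1 - x)) ∧
    1 - x ≤ ((k:ℝ) - 1) * Real.exp (-c + 1) := by
  obtain ⟨hx0, hx1⟩ := hx
  -- c is positive
  have hek : Real.exp (-(k:ℝ)) ≤ 1 / 2 := by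
    have h1 : Real.exp (-(k:ℝ)) ≤ Real.exp (-1) := by
      apply Real.exp_le_exp.2
      have : (4:ℝ) ≤ (k:ℝ) := by exact_mod_cast hk
      linarith
    have h2 : Real.exp (-1) ≤ 1 / 2 := by
      rw [Real.exp_neg]
      have h3 : (2:ℝ) ≤ Real.exp 1 := by
        have := Real.add_one_le_exp (1:ℝ); linarith
      rw [inv_le_comm₀ (Real.exp_pos 1) (by norm_num)]
      norm_num
      linarith
    linarith
  have hc0 : 0 < c := by
    have hk4 : (4:ℝ) ≤ (k:ℝ) := by exact_mod_cast hk
    nlinarith [Real.exp_pos (-(k:ℝ))]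
  set δ := Real.exp (-c * x) with hδ
  have hδ0 : 0 < δ := Real.exp_pos _
  have hδ1 : δ < 1 := by
    rw [hδ, Real.exp_lt_one_iff]
    nlinarith
  -- Bernoulli
  have hbern : 1 + ((k - 1 : ℕ) : ℝ) * (-δ) ≤ (1 + (-δ)) ^ (k - 1) :=
    one_add_mul_le_pow (by linarith) (k - 1)
  have hkcast : ((k - 1 : ℕ) : ℝ) = (k:ℝ) - 1 := by
    have : 1 ≤ k := by omega
    push_cast [this]
    ring
  have hkey : 1 - x ≤ ((k:ℝ) - 1) * δ := by
    have : (1 + (-δ)) ^ (k - 1) = x := by rw [hfix]; ring_nf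
    rw [this, hkcast] at hbern
    linarith
  have hexp : δ = Real.exp (-c + c * (1 - x)) := by
    rw [hδ]; congr 1; ring
  constructor
  · rw [← hexp]; exact hkey
  · have h1 : Real.exp (-c + c * (1 - x)) ≤ Real.exp (-c + 1) := by
      apply Real.exp_le_exp.2
      have : c * (1 - x) ≤ 1 := by
        calc c * (1 - x) ≤ c * (1 / c) := by
              apply mul_le_mul_of_nonneg_left hεc hc0.le
          _ = 1 := by field_simp
      linarith
    have hk1 : (0:ℝ) ≤ (k:ℝ) - 1 := by
      have : (4:ℝ) ≤ (k:ℝ) := by exact_mod_cast hk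
      linarith
    calc 1 - x ≤ ((k:ℝ) - 1) * Real.exp (-c + c * (1 - x)) := by rw [← hexp]; exact hkey
      _ ≤ ((k:ℝ) - 1) * Real.exp (-c + 1) := mul_le_mul_of_nonneg_left h1 hk1
end

section
/- Let k ≥ 4 and θ = 3/2. Define f(δ) = δ/(k - (k-1)δ) - e^{-k(1-δ)}. Then f(0) < 0 and f(θ k e^{-k}) > 0, hence f has a zero δ ∈ (0, θ k e^{-k}). -/
open Real Set

set_option maxHeartbeats 1000000

private lemma aux_decr (k : ℕ) (hk : 4 ≤ k) :
    ((k:ℝ)^2 - k + 1) * Real.exp (-(k:ℝ)) ≤ 13 * Real.exp (-4) := by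
  induction k, hk using Nat.le_induction with
  | base => push_cast; norm_num
  | succ n hn ih =>
    have hn4 : (4:ℝ) ≤ (n:ℝ) := by exact_mod_cast hn
    have he : (5/2:ℝ) ≤ Real.exp 1 := by
      have := Real.exp_one_gt_d9; linarith
    have hEn : 0 < Real.exp (-(n:ℝ)) := Real.exp_pos _
    have hstep : (((n:ℝ)+1)^2 - ((n:ℝ)+1) + 1) * Real.exp (-((n:ℝ)+1))
        ≤ ((n:ℝ)^2 - (n:ℝ) + 1) * Real.exp (-(n:ℝ)) := by
      have hsplit : Real.exp (-((n:ℝ)+1)) = Real.exp (-(n:ℝ)) * Real.exp (-1) := by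
        rw [← Real.exp_add]; ring_nf
      have hkey : (((n:ℝ)+1)^2 - ((n:ℝ)+1) + 1) ≤ Real.exp 1 * ((n:ℝ)^2 - (n:ℝ) + 1) := by
        have hq : (0:ℝ) ≤ (n:ℝ)^2 - (n:ℝ) + 1 := by nlinarith [sq_nonneg ((n:ℝ) - 1)]
        nlinarith [mul_le_mul_of_nonneg_right he hq, sq_nonneg ((n:ℝ) - 4)]
      have hinv : Real.exp (-1) * Real.exp 1 = 1 := by
        rw [← Real.exp_add]; norm_num
      have he1 : (0:ℝ) < Real.exp (-1) := Real.exp_pos _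
      calc (((n:ℝ)+1)^2 - ((n:ℝ)+1) + 1) * Real.exp (-((n:ℝ)+1))
          = (((n:ℝ)+1)^2 - ((n:ℝ)+1) + 1) * Real.exp (-(n:ℝ)) * Real.exp (-1) := by
            rw [hsplit]; ring
        _ ≤ Real.exp 1 * ((n:ℝ)^2 - (n:ℝ) + 1) * Real.exp (-(n:ℝ)) * Real.exp (-1) := by
            have := mul_le_mul_of_nonneg_right
              (mul_le_mul_of_nonneg_right hkey hEn.le) he1.le
            linarith
        _ = ((n:ℝ)^2 - (n:ℝ) + 1) * Real.exp (-(n:ℝ)) * (Real.exp (-1) * Real.exp 1) := by ring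
        _ = ((n:ℝ)^2 - (n:ℝ) + 1) * Real.exp (-(n:ℝ)) := by rw [hinv, mul_one]
    calc (((n+1:ℕ):ℝ)^2 - ((n+1:ℕ):ℝ) + 1) * Real.exp (-((n+1:ℕ):ℝ))
        = (((n:ℝ)+1)^2 - ((n:ℝ)+1) + 1) * Real.exp (-((n:ℝ)+1)) := by push_cast; ring_nf
      _ ≤ ((n:ℝ)^2 - (n:ℝ) + 1) * Real.exp (-(n:ℝ)) := hstep
      _ ≤ 13 * Real.exp (-4) := ih

/-- Let `k ≥ 4` and `θ = 3/2`. For `f(δ) = δ/(k - (k-1)δ) - e^{-k(1-δ)}` one has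
`f(0) < 0` and `f(θ k e^{-k}) > 0`, hence `f` has a zero in `(0, θ k e^{-k})`. -/
theorem zero_of_f (k : ℕ) (hk : 4 ≤ k) :
    letI f : ℝ → ℝ := fun δ => δ / ((k:ℝ) - ((k:ℝ) - 1) * δ) - Real.exp (-(k:ℝ) * (1 - δ))
    f 0 < 0 ∧ 0 < f ((3/2) * (k:ℝ) * Real.exp (-(k:ℝ))) ∧
      ∃ δ ∈ Ioo (0:ℝ) ((3/2) * (k:ℝ) * Real.exp (-(k:ℝ))), f δ = 0 := by
  set c : ℝ := (k:ℝ) with hcdef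
  have hc4 : (4:ℝ) ≤ c := by rw [hcdef]; exact_mod_cast hk
  have hc0 : (0:ℝ) < c := by linarith
  have hE : 0 < Real.exp (-c) := Real.exp_pos _
  set x : ℝ := 3/2 * c * Real.exp (-c) with hxdef
  set s : ℝ := 3/2 * ((c^2 - c + 1) * Real.exp (-c)) with hsdef
  clear_value c x s
  have hcne : c ≠ 0 := ne_of_gt hc0
  have hs_ub : s ≤ 39/2 * Real.exp (-4) := by
    have h := aux_decr k hk
    rw [← hcdef] at h
    rw [hsdef]; linarith
  have hexp4 : (53.9:ℝ) < Real.exp 4 := by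
    have h1 : (2.71:ℝ) < Real.exp 1 := by
      have := Real.exp_one_gt_d9; linarith
    have h2 : ((2.71:ℝ))^4 < (Real.exp 1)^4 := by
      have := pow_lt_pow_left₀ h1 (by norm_num : (0:ℝ) ≤ 2.71) (by norm_num : 4 ≠ 0)
      exact this
    have h3 : (Real.exp 1)^4 = Real.exp 4 := by
      rw [← Real.exp_nat_mul]; norm_num
    nlinarith
  have hsmall : s < 0.362 := by
    have h4 : Real.exp (-4) = 1 / Real.exp 4 := by
      rw [Real.exp_neg, inv_eq_one_div]
    have hp : (0:ℝ) < Real.exp 4 := Real.exp_pos _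
    have h5 : Real.exp (-4) < 1 / 53.9 := by
      rw [h4]
      exact div_lt_div_of_pos_left (by norm_num) (by norm_num) hexp4
    nlinarith
  have hs_pos : 0 < s := by
    have hq : (0:ℝ) < c^2 - c + 1 := by nlinarith [sq_nonneg (c - 1)]
    rw [hsdef]; nlinarith [mul_pos hq hE]
  have hx_le_s : x ≤ s := by
    rw [hxdef, hsdef]
    nlinarith
  have hx1 : x < 1 := by linarith
  have hx0 : 0 < x := by rw [hxdef]; nlinarith [mul_pos hc0 hE]
  -- exp s < 3/2
  have hexps : Real.exp s < 3/2 := by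
    have h1 : 1 - s/2 ≤ Real.exp (-(s/2)) := by
      have := Real.add_one_le_exp (-(s/2)); linarith
    have h2 : (0:ℝ) < 1 - s/2 := by linarith
    have h3 : Real.exp (s/2) ≤ 1/(1 - s/2) := by
      rw [le_div_iff₀ h2]
      have hmul : Real.exp (s/2) * Real.exp (-(s/2)) = 1 := by
        rw [← Real.exp_add]; simp
      nlinarith [Real.exp_pos (s/2)]
    have h4 : Real.exp s = Real.exp (s/2) * Real.exp (s/2) := by
      rw [← Real.exp_add]; ring_nf
    have h5 : (1 - s/2)^2 > 2/3 := by
      nlinarith [sq_nonneg (s - 0.362)]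
    have h6 : (1/(1 - s/2)) * (1/(1 - s/2)) < 3/2 := by
      rw [div_mul_div_comm, one_mul, div_lt_iff₀ (mul_pos h2 h2)]
      nlinarith
    calc Real.exp s = Real.exp (s/2) * Real.exp (s/2) := h4
      _ ≤ (1/(1 - s/2)) * (1/(1 - s/2)) :=
          mul_le_mul h3 h3 (Real.exp_pos _).le (one_div_nonneg.mpr h2.le)
      _ < 3/2 := h6
  -- denominator at x
  set Dx : ℝ := c - (c - 1) * x with hDdef
  clear_value Dx
  have hDx1 : 1 ≤ Dx := by
    have h := mul_nonneg (show (0:ℝ) ≤ c - 1 by linarith) (show (0:ℝ) ≤ 1 - x by linarith)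
    rw [hDdef]; linarith [h]
  have hDx0 : 0 < Dx := by linarith
  have hexpand : Real.exp (-c * (1 - x)) = Real.exp (-c) * Real.exp (c * x) := by
    rw [← Real.exp_add]; ring_nf
  have hDle : Dx ≤ c * Real.exp (-((c - 1) * x / c)) := by
    have h := Real.add_one_le_exp (-((c - 1) * x / c))
    have heq : c * (-((c - 1) * x / c) + 1) = Dx := by
      rw [hDdef]; field_simp; ring
    calc Dx = c * (-((c - 1) * x / c) + 1) := heq.symm
      _ ≤ c * Real.exp (-((c - 1) * x / c)) := mul_le_mul_of_nonneg_left h hc0.le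
  have hsum : c * x + -((c - 1) * x / c) = s := by
    rw [hxdef, hsdef]; field_simp; ring
  have hkey : Real.exp (-c * (1 - x)) * Dx < x := by
    calc Real.exp (-c * (1 - x)) * Dx
        = Real.exp (-c) * Real.exp (c * x) * Dx := by rw [hexpand]
      _ ≤ Real.exp (-c) * Real.exp (c * x) * (c * Real.exp (-((c - 1) * x / c))) :=
          mul_le_mul_of_nonneg_left hDle (by positivity)
      _ = c * Real.exp (-c) * (Real.exp (c * x) * Real.exp (-((c - 1) * x / c))) := by ring
      _ = c * Real.exp (-c) * Real.exp s := by rw [← Real.exp_add, hsum]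
      _ < c * Real.exp (-c) * (3/2) := by
          exact mul_lt_mul_of_pos_left hexps (mul_pos hc0 hE)
      _ = x := by rw [hxdef]; ring
  have hfx : 0 < x / (c - (c - 1) * x) - Real.exp (-c * (1 - x)) := by
    rw [← hDdef]
    exact sub_pos.mpr ((lt_div_iff₀ hDx0).mpr hkey)
  have hf0 : (0:ℝ) / (c - (c - 1) * 0) - Real.exp (-c * (1 - 0)) < 0 := by
    rw [zero_div]
    simpa using Real.exp_pos (-c * (1 - (0:ℝ)))
  have hcont : ContinuousOn
      (fun δ : ℝ => δ / (c - (c - 1) * δ) - Real.exp (-c * (1 - δ))) (Icc 0 x) := by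
    apply ContinuousOn.sub
    · apply ContinuousOn.div continuous_id.continuousOn
        ((continuous_const.sub (continuous_const.mul continuous_id)).continuousOn)
      intro δ hδ
      have h1 : δ ≤ x := hδ.2
      have h2 : (0:ℝ) ≤ δ := hδ.1
      have : 0 < c - (c - 1) * δ := by nlinarith
      exact ne_of_gt this
    · exact (Real.continuous_exp.comp
        (continuous_const.mul (continuous_const.sub continuous_id))).continuousOn
  have hsub := intermediate_value_Ioo hx0.le hcont
  have hmem : (0:ℝ) ∈ Ioo ((fun δ : ℝ => δ / (c - (c - 1) * δ) - Real.exp (-c * (1 - δ))) 0)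
      ((fun δ : ℝ => δ / (c - (c - 1) * δ) - Real.exp (-c * (1 - δ))) x) := ⟨hf0, hfx⟩
  obtain ⟨δ, hδ, hfδ⟩ := hsub hmem
  exact ⟨hf0, hfx, δ, hδ, hfδ⟩
end

section
/- Let B be a minimum weight basis (maximal independent set of full rank n*) of a finite collection of GF(2) vectors with weights X_c ∈ [0,1], constructed greedily by increasing weight. Then the total weight satisfies Σ_{c∈B} X_c = ∫_0^1 (n* - rank(A_p)) dp, where A_p is the matrix whose columns are all vectors c with X_c ≤ p and n* = rank of the whole collection. -/
open Set

section Aux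

variable {V : Type*} [AddCommGroup V] [Module (ZMod 2) V]
  {N : ℕ} {c : Fin N → V} {B : Finset (Fin N)}

lemma aux_li (hB : ∀ i, i ∈ B ↔ c i ∉ Submodule.span (ZMod 2) (c '' {j | j ∈ B ∧ j < i})) :
    LinearIndependent (ZMod 2) (fun i : B => c i) := by
  classical
  rw [linearIndependent_iff']
  intro s g hsum i hi
  by_contra hg
  have hone : ∀ a : ZMod 2, a ≠ 0 → a = 1 := by decide
  set t := s.filter (fun j => g j ≠ 0) with ht
  have hne : t.Nonempty := ⟨i, Finset.mem_filter.2 ⟨hi, hg⟩⟩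
  set m := t.max' hne with hm
  have hmt : m ∈ t := t.max'_mem hne
  have hsum' : ∑ j ∈ t, g j • c (j : Fin N) = 0 := by
    rw [ht, Finset.sum_filter_of_ne, hsum]
    intro x _ h
    intro hx0
    exact h (by rw [hx0, zero_smul])
  have hgm : g m = 1 := hone _ (Finset.mem_filter.1 hmt).2
  have hc : c (m : Fin N) = -(∑ j ∈ t.erase m, g j • c (j : Fin N)) := by
    have h2 := Finset.add_sum_erase t (fun j => g j • c (j : Fin N)) hmt
    simp only [hgm, one_smul] at h2
    rw [hsum'] at h2
    linear_combination (norm := abel) h2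
  have hmem : c (m : Fin N) ∈ Submodule.span (ZMod 2) (c '' {j | j ∈ B ∧ j < (m : Fin N)}) := by
    rw [hc]
    refine neg_mem (Submodule.sum_mem _ fun j hj => Submodule.smul_mem _ _ (Submodule.subset_span ?_))
    have hjm : j < m := lt_of_le_of_ne (t.le_max' j (Finset.mem_of_mem_erase hj))
      (Finset.ne_of_mem_erase hj)
    exact ⟨(j : Fin N), ⟨j.2, hjm⟩, rfl⟩
  exact ((hB (m : Fin N)).1 m.2) hmem

end Aux

section Aux2

variable {V : Type*} [AddCommGroup V] [Module (ZMod 2) V]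
  {N : ℕ} {c : Fin N → V} {B : Finset (Fin N)}

lemma aux_mem (hB : ∀ i, i ∈ B ↔ c i ∉ Submodule.span (ZMod 2) (c '' {j | j ∈ B ∧ j < i}))
    (i : Fin N) : c i ∈ Submodule.span (ZMod 2) (c '' {j | j ∈ B ∧ j ≤ i}) := by
  by_cases hi : i ∈ B
  · exact Submodule.subset_span ⟨i, ⟨hi, le_refl i⟩, rfl⟩
  · have h2 : c i ∈ Submodule.span (ZMod 2) (c '' {j | j ∈ B ∧ j < i}) := by
      by_contra h; exact hi ((hB i).2 h)
    have hsub : {j | j ∈ B ∧ j < i} ⊆ {j | j ∈ B ∧ j ≤ i} := fun j hj => ⟨hj.1, le_of_lt hj.2⟩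
    exact Submodule.span_mono (Set.image_mono hsub) h2

lemma aux_span (hB : ∀ i, i ∈ B ↔ c i ∉ Submodule.span (ZMod 2) (c '' {j | j ∈ B ∧ j < i}))
    {S : Set (Fin N)} (hS : ∀ i ∈ S, ∀ j, j ≤ i → j ∈ S) :
    Submodule.span (ZMod 2) (c '' S) = Submodule.span (ZMod 2) (c '' (S ∩ ↑B)) := by
  refine le_antisymm ?_ (Submodule.span_mono (Set.image_mono Set.inter_subset_left))
  rw [Submodule.span_le]
  rintro x ⟨i, hiS, rfl⟩
  have h1 := aux_mem hB i
  have hsub : {j | j ∈ B ∧ j ≤ i} ⊆ S ∩ ↑B := fun j hj => ⟨hS i hiS j hj.2, hj.1⟩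
  exact Submodule.span_mono (Set.image_mono hsub) h1

lemma aux_rank [FiniteDimensional (ZMod 2) V]
    (hB : ∀ i, i ∈ B ↔ c i ∉ Submodule.span (ZMod 2) (c '' {j | j ∈ B ∧ j < i}))
    {S : Set (Fin N)} (hS : ∀ i ∈ S, ∀ j, j ≤ i → j ∈ S)
    {T : Finset (Fin N)} (hT : ↑T = S ∩ ↑B) :
    Module.finrank (ZMod 2) (Submodule.span (ZMod 2) (c '' S)) = T.card := by
  rw [aux_span hB hS, ← hT]
  have hTB : ∀ j ∈ T, j ∈ B := fun j hj => (hT ▸ Finset.mem_coe.2 hj : (j : Fin N) ∈ S ∩ ↑B).2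
  have hli : LinearIndependent (ZMod 2) (fun i : T => c i) := by
    exact (aux_li hB).comp (fun i : T => (⟨i.1, hTB i.1 i.2⟩ : B))
      (fun a b hab => Subtype.ext (by simpa using hab))
  have hr : Set.range (fun i : T => c i) = c '' ↑T := by
    ext x; simp
  rw [← hr, finrank_span_eq_card hli, Fintype.card_coe]

end Aux2

lemma aux_integral {a : ℝ} (h0 : 0 ≤ a) (h1 : a ≤ 1) :
    ∫ p in (0:ℝ)..1, (Set.Iio a).indicator (fun _ => (1:ℝ)) p = a := by
  rw [intervalIntegral.integral_of_le zero_le_one,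
    MeasureTheory.setIntegral_indicator measurableSet_Iio]
  have h : Ioc (0:ℝ) 1 ∩ Iio a = Ioo 0 a := by
    ext x
    constructor
    · rintro ⟨⟨hx0, _⟩, hxa⟩; exact ⟨hx0, hxa⟩
    · rintro ⟨hx0, hxa⟩; exact ⟨⟨hx0, le_trans (le_of_lt hxa) h1⟩, hxa⟩
  rw [h]
  simp [Real.volume_Ioo, ENNReal.toReal_ofReal h0, h0]

lemma aux_intble (a : ℝ) : IntervalIntegrable ((Set.Iio a).indicator (fun _ => (1:ℝ)))
    MeasureTheory.volume 0 1 := by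
  rw [intervalIntegrable_iff]
  refine MeasureTheory.Integrable.indicator ?_ measurableSet_Iio
  exact MeasureTheory.integrableOn_const (by simp [Set.uIoc])

/-- Let `B` be the minimum weight basis of the collection `c : Fin N → V` of `GF(2)`
vectors with weights `X i ∈ [0,1]`, constructed greedily by increasing weight. Then
`Σ_{i ∈ B} X i = ∫_0^1 (n* - rank A_p) dp`, where `A_p` consists of the vectors of
weight at most `p` and `n*` is the rank of the whole collection. -/
theorem min_weight_basis_integral {V : Type*} [AddCommGroup V] [Module (ZMod 2) V]
    [FiniteDimensional (ZMod 2) V]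
    (N : ℕ) (c : Fin N → V) (X : Fin N → ℝ) (hmono : Monotone X)
    (hX : ∀ i, X i ∈ Icc (0:ℝ) 1)
    (B : Finset (Fin N))
    (hB : ∀ i, i ∈ B ↔ c i ∉ Submodule.span (ZMod 2) (c '' {j | j ∈ B ∧ j < i})) :
    ∑ i ∈ B, X i = ∫ p in (0:ℝ)..1,
      ((Module.finrank (ZMod 2) (Submodule.span (ZMod 2) (Set.range c)) : ℝ) -
        (Module.finrank (ZMod 2) (Submodule.span (ZMod 2) (c '' {i | X i ≤ p})) : ℝ)) := by
  classical
  have hrank_all : Module.finrank (ZMod 2) (Submodule.span (ZMod 2) (Set.range c)) = B.card := by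
    have h := aux_rank hB (S := Set.univ) (fun i _ j _ => trivial) (T := B) (by simp)
    rwa [Set.image_univ] at h
  have hrank_p : ∀ p : ℝ, Module.finrank (ZMod 2)
      (Submodule.span (ZMod 2) (c '' {i | X i ≤ p})) = (B.filter fun i => X i ≤ p).card := by
    intro p
    refine aux_rank hB (fun i hi j hji => le_trans (hmono hji) hi) ?_
    ext x
    simp only [Finset.coe_filter, Set.mem_setOf_eq, Set.mem_inter_iff, Finset.mem_coe]
    exact and_comm
  have hfun : ∀ p : ℝ,
      ((Module.finrank (ZMod 2) (Submodule.span (ZMod 2) (Set.range c)) : ℝ) -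
        (Module.finrank (ZMod 2) (Submodule.span (ZMod 2) (c '' {i | X i ≤ p})) : ℝ)) =
      ∑ i ∈ B, (Set.Iio (X i)).indicator (fun _ => (1:ℝ)) p := by
    intro p
    rw [hrank_all, hrank_p p]
    have hsplit := Finset.card_filter_add_card_filter_not (s := B)
      (p := fun i => X i ≤ p)
    have hsum : ∑ i ∈ B, (Set.Iio (X i)).indicator (fun _ => (1:ℝ)) p =
        ((B.filter fun i => ¬ X i ≤ p).card : ℝ) := by
      simp only [Set.indicator_apply, Set.mem_Iio]
      rw [Finset.sum_boole]
      have heq : (B.filter fun x => p < X x) = B.filter fun i => ¬ X i ≤ p :=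
        Finset.filter_congr fun i _ => by simp [not_le]
      rw [heq]
    rw [hsum]
    have : ((B.filter fun i => X i ≤ p).card : ℝ) + ((B.filter fun i => ¬ X i ≤ p).card : ℝ)
        = (B.card : ℝ) := by exact_mod_cast hsplit
    linarith
  have hcongr : (∫ p in (0:ℝ)..1,
      ((Module.finrank (ZMod 2) (Submodule.span (ZMod 2) (Set.range c)) : ℝ) -
        (Module.finrank (ZMod 2) (Submodule.span (ZMod 2) (c '' {i | X i ≤ p})) : ℝ))) =
      ∫ p in (0:ℝ)..1, ∑ i ∈ B, (Set.Iio (X i)).indicator (fun _ => (1:ℝ)) p :=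
    intervalIntegral.integral_congr fun p _ => hfun p
  rw [hcongr, intervalIntegral.integral_finset_sum (fun i _ => aux_intble (X i))]
  exact Finset.sum_congr rfl fun i _ => (aux_integral (hX i).1 (hX i).2).symm
end
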